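/- (Tzitzeica 1-soliton, Sections 3 and 5) Let q, θ ∈ ℝ and define F(u,v) = exp(q/2 − √3·(u·e^{−θ} + v·e^{θ})) for (u,v) ∈ ℝ². On the open set U = {(u,v) ∈ ℝ² : 1 − 4F(u,v) + F(u,v)² > 0}, define Ψ(u,v) = ln((1 − 4F(u,v) + F(u,v)²)/(1 + F(u,v))²). Then Ψ satisfies the Tzitzeica equation ∂_u∂_v Ψ = exp(Ψ) − exp(−2Ψ) at every point of U. -/

import Mathlib

open Real

noncomputable def mixedDerivR (f : ℝ → ℝ → ℝ) (u v : ℝ) : ℝ :=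
  deriv (fun u' => deriv (fun v' => f u' v') v) u

namespace TzHelp

/-- P x = log(1-4x+x²) - 2 log(1+x) -/
noncomputable def P (x : ℝ) : ℝ := Real.log (1 - 4*x + x^2) - 2 * Real.log (1 + x)

noncomputable def g (x : ℝ) : ℝ := (2*x - 4)/(1 - 4*x + x^2) - 2/(1 + x)

noncomputable def g' (x : ℝ) : ℝ :=
  (2*(1 - 4*x + x^2) - (2*x - 4)^2)/(1 - 4*x + x^2)^2 + 2/(1 + x)^2

lemma hasDerivAt_P {x : ℝ} (hx : 0 < x) (hG : 0 < 1 - 4*x + x^2) :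
    HasDerivAt P (g x) x := by
  have h1 : HasDerivAt (fun y : ℝ => 1 - 4*y + y^2) (2*x - 4) x := by
    have := ((hasDerivAt_id x).const_mul 4).const_sub 1 |>.add (hasDerivAt_pow 2 x)
    simpa [mul_comm, Pi.add_def] using this.congr_deriv (by push_cast; ring)
  have h2 : HasDerivAt (fun y : ℝ => 1 + y) 1 x := (hasDerivAt_id x).const_add 1
  have hlog1 := (h1.log hG.ne')
  have hlog2 := (h2.log (by linarith : (1:ℝ) + x ≠ 0))
  have := hlog1.sub (hlog2.const_mul 2)
  unfold P
  simpa [P, g, mul_one, mul_div_assoc, Pi.sub_def, div_eq_mul_inv] using this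

lemma hasDerivAt_g {x : ℝ} (hx : 0 < x) (hG : 0 < 1 - 4*x + x^2) :
    HasDerivAt g (g' x) x := by
  have h1 : HasDerivAt (fun y : ℝ => 1 - 4*y + y^2) (2*x - 4) x := by
    have := ((hasDerivAt_id x).const_mul 4).const_sub 1 |>.add (hasDerivAt_pow 2 x)
    simpa [mul_comm, Pi.add_def] using this.congr_deriv (by push_cast; ring)
  have h0 : HasDerivAt (fun y : ℝ => 2*y - 4) 2 x := by
    simpa using ((hasDerivAt_id x).const_mul 2).sub_const 4
  have h2 : HasDerivAt (fun y : ℝ => 1 + y) 1 x := (hasDerivAt_id x).const_add 1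
  have hq1 := h0.div h1 hG.ne'
  have hq2 := (hasDerivAt_const x (2:ℝ)).div h2 (by linarith : (1:ℝ) + x ≠ 0)
  have := hq1.sub hq2
  refine this.congr_deriv ?_
  rw [g']
  field_simp
  ring

end TzHelp

theorem one_soliton_tzitzeica (q θ : ℝ) (F Ψ : ℝ → ℝ → ℝ)
    (hF : ∀ u v, F u v =
      Real.exp (q / 2 - Real.sqrt 3 * (u * Real.exp (-θ) + v * Real.exp θ)))
    (hΨ : ∀ u v, Ψ u v =
      Real.log ((1 - 4 * F u v + (F u v) ^ 2) / (1 + F u v) ^ 2)) :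
    ∀ u v : ℝ, 0 < 1 - 4 * F u v + (F u v) ^ 2 →
      mixedDerivR Ψ u v = Real.exp (Ψ u v) - Real.exp (-2 * Ψ u v) := by
  intro u v hG
  classical
  set B : ℝ := Real.sqrt 3 * Real.exp (-θ) with hB
  set C : ℝ := Real.sqrt 3 * Real.exp θ with hC
  have hBC : B * C = 3 := by
    rw [hB, hC]
    have h3 : Real.sqrt 3 * Real.sqrt 3 = 3 := Real.mul_self_sqrt (by norm_num)
    rw [show Real.sqrt 3 * Real.exp (-θ) * (Real.sqrt 3 * Real.exp θ)
        = (Real.sqrt 3 * Real.sqrt 3) * (Real.exp (-θ) * Real.exp θ) by ring,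
      h3, ← Real.exp_add]
    simp
  -- E u v = F u v
  have hFval : ∀ u' v', F u' v' = Real.exp (q/2 - B*u' - C*v') := by
    intro u' v'; rw [hF, hB, hC]; ring_nf
  have hFpos : ∀ u' v', 0 < F u' v' := fun u' v' => by rw [hFval]; exact Real.exp_pos _
  -- F is continuous
  have hFcont : Continuous (fun p : ℝ × ℝ => F p.1 p.2) := by
    have : Continuous (fun p : ℝ × ℝ => Real.exp (q/2 - B*p.1 - C*p.2)) := by
      fun_prop
    exact this.congr (fun p => (hFval p.1 p.2).symm)
  have hOpen : IsOpen {p : ℝ × ℝ | 0 < 1 - 4 * F p.1 p.2 + (F p.1 p.2)^2} := by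
    have : Continuous (fun p : ℝ × ℝ => 1 - 4 * F p.1 p.2 + (F p.1 p.2)^2) := by
      fun_prop
    exact isOpen_lt continuous_const this
  -- On the open set, Ψ = P ∘ F
  have hΨP : ∀ u' v', 0 < 1 - 4 * F u' v' + (F u' v')^2 →
      Ψ u' v' = TzHelp.P (F u' v') := by
    intro u' v' h
    have h1 : (0:ℝ) < 1 + F u' v' := by have := hFpos u' v'; linarith
    rw [hΨ, TzHelp.P, Real.log_div h.ne' (by positivity), Real.log_pow]
    push_cast; ring
  -- derivative of F in each variable
  have hFdv : ∀ u' v', HasDerivAt (fun w => F u' w) (-C * F u' v') v' := by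
    intro u' v'
    have h : HasDerivAt (fun w : ℝ => q/2 - B*u' - C*w) (-C) v' := by
      simpa using (((hasDerivAt_id v').const_mul C).const_sub (q/2 - B*u'))
    have := h.exp
    refine (this.congr_deriv (by rw [hFval]; ring)).congr_of_eventuallyEq ?_
    filter_upwards with w; rw [hFval]
  have hFdu : ∀ u' v', HasDerivAt (fun w => F w v') (-B * F u' v') u' := by
    intro u' v'
    have h : HasDerivAt (fun w : ℝ => q/2 - B*w - C*v') (-B) u' := by
      have := (((hasDerivAt_id u').const_mul B).const_sub (q/2)).sub_const (C*v')
      simpa using this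
    have := h.exp
    refine (this.congr_deriv (by rw [hFval]; ring)).congr_of_eventuallyEq ?_
    filter_upwards with w; rw [hFval]
  -- inner derivative
  have hInner : ∀ u' v', 0 < 1 - 4 * F u' v' + (F u' v')^2 →
      HasDerivAt (fun w => Ψ u' w) (TzHelp.g (F u' v') * (-C * F u' v')) v' := by
    intro u' v' h
    have hd : HasDerivAt (fun w => TzHelp.P (F u' w)) (TzHelp.g (F u' v') * (-C * F u' v')) v' :=
      (TzHelp.hasDerivAt_P (hFpos u' v') h).comp v' (hFdv u' v')
    refine hd.congr_of_eventuallyEq ?_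
    have hmem : ((u', v') : ℝ × ℝ) ∈ {p : ℝ × ℝ | 0 < 1 - 4 * F p.1 p.2 + (F p.1 p.2)^2} := h
    have hnb : ∀ᶠ w in nhds v', 0 < 1 - 4 * F u' w + (F u' w)^2 := by
      have hc : Continuous (fun w : ℝ => ((u', w) : ℝ × ℝ)) := by fun_prop
      have := (hOpen.mem_nhds hmem)
      have := hc.continuousAt.preimage_mem_nhds this
      filter_upwards [this] with w hw using hw
    filter_upwards [hnb] with w hw
    exact hΨP u' w hw
  -- outer derivative: near u, inner deriv function equals J(F u' v)
  have hnbu : ∀ᶠ w in nhds u, 0 < 1 - 4 * F w v + (F w v)^2 := by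
    have hc : Continuous (fun w : ℝ => ((w, v) : ℝ × ℝ)) := by fun_prop
    have := hc.continuousAt.preimage_mem_nhds (hOpen.mem_nhds hG)
    filter_upwards [this] with w hw using hw
  have hEq : (fun w => deriv (fun v' => Ψ w v') v) =ᶠ[nhds u]
      (fun w => TzHelp.g (F w v) * (-C * F w v)) := by
    filter_upwards [hnbu] with w hw
    exact (hInner w v hw).deriv
  -- derivative of w ↦ g(F w v) * (-C * F w v) at u
  set x : ℝ := F u v with hx
  have hxpos : 0 < x := hFpos u v
  have hGx : 0 < 1 - 4*x + x^2 := hG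
  have hgd : HasDerivAt (fun w => TzHelp.g (F w v)) (TzHelp.g' x * (-B * x)) u :=
    by have h := (TzHelp.hasDerivAt_g hxpos hGx).comp u (hFdu u v); exact h
  have hprod : HasDerivAt (fun w => TzHelp.g (F w v) * (-C * F w v))
      (TzHelp.g' x * (-B * x) * (-C * x) + TzHelp.g x * (-C * (-B * x))) u := by
    have h2 : HasDerivAt (fun w => -C * F w v) (-C * (-B * x)) u := (hFdu u v).const_mul (-C)
    exact hgd.mul h2
  have hmix : mixedDerivR Ψ u v =
      TzHelp.g' x * (-B * x) * (-C * x) + TzHelp.g x * (-C * (-B * x)) := by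
    rw [mixedDerivR]
    rw [Filter.EventuallyEq.deriv_eq hEq]
    exact hprod.deriv
  -- exponentials
  have h1x : (0:ℝ) < 1 + x := by linarith
  have hePsi : Real.exp (Ψ u v) = (1 - 4*x + x^2) / (1 + x)^2 := by
    rw [hΨ]
    rw [Real.exp_log (by positivity)]
  have heNeg : Real.exp (-2 * Ψ u v) = ((1 + x)^2 / (1 - 4*x + x^2))^2 := by
    have h2 : -2 * Ψ u v = (2:ℕ) * (-Ψ u v) := by push_cast; ring
    rw [h2, Real.exp_nat_mul, Real.exp_neg, hePsi, inv_div]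
  rw [hmix, hePsi, heNeg, TzHelp.g, TzHelp.g']
  have hBC3 : C = 3 / B := by
    have hBpos : 0 < B := by rw [hB]; positivity
    field_simp at hBC ⊢; linarith [hBC]
  rw [hBC3]
  have hBpos : 0 < B := by rw [hB]; positivity
  field_simp
  ring
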